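/- Let n = m + 2r with r ≥ 0 and consider V = ℂⁿ ⊗ ℂᵐ ⊕ ℂⁿ ⊗ ℂᵐ with the symplectic form of the Rankin–Selberg construction. Let r' = m + r. Define Y₋ = span of {(e_i ⊗ e_j, 0), (0, e_i ⊗ e_j) : i + j > r' + 1} together with {(e_{j+r} ⊗ e_{m−j+1}, 0) : 1 ≤ j ≤ m}. Then Y₋ is a Lagrangian subspace: it is isotropic and has dimension nm (half of dim V = 2nm). -/

import Mathlib

open scoped TensorProduct BigOperators

/-- The `k × k` antidiagonal matrix `J_k` with `(J_k)_{i, k+1−i} = (−1)^{i−1}` (1-based). -/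
noncomputable def Jmat (k : ℕ) : Matrix (Fin k) (Fin k) ℂ :=
  Matrix.of fun i j => if (i : ℕ) + (j : ℕ) = k - 1 then (-1 : ℂ) ^ (i : ℕ) else 0

/-- The pairing `(u, x) ↦ ᵗu J_k⁻¹ x` on `ℂ^k`. -/
noncomputable def pairK (k : ℕ) : (Fin k → ℂ) →ₗ[ℂ] (Fin k → ℂ) →ₗ[ℂ] ℂ :=
  Matrix.toLinearMap₂' ℂ (Jmat k)⁻¹

/-- The induced pairing on `ℂ^n ⊗ ℂ^m`. -/
noncomputable def QQ (n m : ℕ) :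
    LinearMap.BilinForm ℂ ((Fin n → ℂ) ⊗[ℂ] (Fin m → ℂ)) :=
  LinearMap.BilinForm.tmul (pairK n) (pairK m)

/-- The Rankin–Selberg symplectic form on `ℂⁿ ⊗ ℂᵐ ⊕ ℂⁿ ⊗ ℂᵐ`. -/
noncomputable def RSform (n m : ℕ)
    (a b : ((Fin n → ℂ) ⊗[ℂ] (Fin m → ℂ)) × ((Fin n → ℂ) ⊗[ℂ] (Fin m → ℂ))) : ℂ :=
  QQ n m a.1 b.2 - QQ n m b.1 a.2

/-- Standard basis vector `e_i` of `ℂ^k`. -/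
noncomputable def stdVec (k : ℕ) (i : Fin k) : Fin k → ℂ := Pi.single i 1

/-- The generating set of the Lagrangian `Y₋` (with `n = m + 2r`, `r' = m + r`,
all in 0-based indexing: `i + j > r' + 1` 1-based becomes `i + j ≥ m + r`). -/
def Yset (m r : ℕ) :
    Set (((Fin (m + 2 * r) → ℂ) ⊗[ℂ] (Fin m → ℂ)) ×
      ((Fin (m + 2 * r) → ℂ) ⊗[ℂ] (Fin m → ℂ))) :=
  {p | (∃ (i : Fin (m + 2 * r)) (j : Fin m), (i : ℕ) + (j : ℕ) ≥ m + r ∧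
          (p = (stdVec (m + 2 * r) i ⊗ₜ[ℂ] stdVec m j, 0) ∨
            p = (0, stdVec (m + 2 * r) i ⊗ₜ[ℂ] stdVec m j))) ∨
       (∃ j : Fin m,
          p = (stdVec (m + 2 * r) (⟨(j : ℕ) + r, by have := j.2; omega⟩) ⊗ₜ[ℂ]
            stdVec m (⟨m - 1 - (j : ℕ), by have := j.2; omega⟩), 0))}

lemma Jmat_mul_self (k : ℕ) : Jmat k * Jmat k = ((-1 : ℂ) ^ (k - 1)) • 1 := by
  ext i j
  have hi := i.2
  have hj := j.2
  rw [Matrix.mul_apply]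
  rw [Finset.sum_eq_single (⟨k - 1 - (i : ℕ), by omega⟩ : Fin k)]
  · simp only [Jmat, Matrix.of_apply, Matrix.smul_apply, Matrix.one_apply, Fin.val_mk]
    by_cases h : i = j
    · subst h
      rw [if_pos (by omega), if_pos (by omega), if_pos rfl, ← pow_add, smul_eq_mul, mul_one]
      congr 1
      omega
    · rw [if_neg h, smul_zero]
      by_cases h2 : (i : ℕ) + (k - 1 - (i : ℕ)) = k - 1
      · rw [if_pos h2, if_neg, mul_zero]
        intro hc
        exact h (Fin.ext (by omega))
      · rw [if_neg h2, zero_mul]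
  · intro b _ hb
    simp only [Jmat, Matrix.of_apply]
    rw [if_neg, zero_mul]
    intro hc
    have : (b : ℕ) = k - 1 - (i : ℕ) := by omega
    exact hb (Fin.ext (by simpa using this))
  · simp

lemma Jmat_inv (k : ℕ) : (Jmat k)⁻¹ = ((-1 : ℂ) ^ (k - 1)) • Jmat k := by
  apply Matrix.inv_eq_right_inv
  rw [Matrix.mul_smul, Jmat_mul_self, smul_smul, ← pow_add]
  rw [show (-1 : ℂ) ^ ((k - 1) + (k - 1)) = 1 by
    rw [← two_mul, pow_mul]; norm_num]
  simp

lemma pairK_single (k : ℕ) (i j : Fin k) :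
    pairK k (stdVec k i) (stdVec k j) =
      ((-1 : ℂ) ^ (k - 1)) * (if (i : ℕ) + (j : ℕ) = k - 1 then (-1 : ℂ) ^ (i : ℕ) else 0) := by
  rw [pairK, stdVec, stdVec, Matrix.toLinearMap₂'_apply]
  rw [Finset.sum_eq_single i]
  · rw [Finset.sum_eq_single j]
    · rw [Jmat_inv]; simp [Jmat, mul_comm]
    · intro b _ hb; simp [Pi.single_apply, hb]
    · simp
  · intro b _ hb
    simp [Pi.single_apply, hb]
  · simp

lemma pairK_single_eq_zero (k : ℕ) (i j : Fin k) (h : (i : ℕ) + (j : ℕ) ≠ k - 1) :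
    pairK k (stdVec k i) (stdVec k j) = 0 := by
  rw [pairK_single, if_neg h, mul_zero]

lemma QQ_single (n m : ℕ) (i i' : Fin n) (j j' : Fin m) :
    QQ n m (stdVec n i ⊗ₜ[ℂ] stdVec m j) (stdVec n i' ⊗ₜ[ℂ] stdVec m j') =
      pairK m (stdVec m j) (stdVec m j') • pairK n (stdVec n i) (stdVec n i') := rfl

lemma QQ_single_eq_zero (n m : ℕ) (i i' : Fin n) (j j' : Fin m)
    (h : ¬((i : ℕ) + (i' : ℕ) = n - 1 ∧ (j : ℕ) + (j' : ℕ) = m - 1)) :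
    QQ n m (stdVec n i ⊗ₜ[ℂ] stdVec m j) (stdVec n i' ⊗ₜ[ℂ] stdVec m j') = 0 := by
  rw [QQ_single]
  rcases Decidable.not_and_iff_or_not.mp h with h | h
  · rw [pairK_single_eq_zero n i i' h, smul_zero]
  · rw [pairK_single_eq_zero m j j' h, zero_smul]

lemma Yset_pair (m r : ℕ) (p q : _) (hp : p ∈ Yset m r) (hq : q ∈ Yset m r) :
    RSform (m + 2 * r) m p q = 0 := by
  have key : ∀ (i i' : Fin (m + 2 * r)) (j j' : Fin m),
      ¬((i : ℕ) + (i' : ℕ) = m + 2 * r - 1 ∧ (j : ℕ) + (j' : ℕ) = m - 1) →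
      QQ (m + 2 * r) m (stdVec _ i ⊗ₜ[ℂ] stdVec m j) (stdVec _ i' ⊗ₜ[ℂ] stdVec m j') = 0 :=
    fun i i' j j' h => QQ_single_eq_zero _ _ i i' j j' h
  rcases hp with ⟨i, j, hij, hp | hp⟩ | ⟨j, hp⟩ <;>
    rcases hq with ⟨i', j', hij', hq | hq⟩ | ⟨j', hq⟩ <;>
      subst hp <;> subst hq <;>
        simp only [RSform, map_zero, LinearMap.zero_apply, sub_zero, zero_sub, neg_eq_zero,
          sub_self]
  · exact key i i' j j' (by
      have := i.2; have := j.2; have := i'.2; have := j'.2; omega)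
  · exact key i' i j' j (by
      have := i.2; have := j.2; have := i'.2; have := j'.2; omega)
  · exact key _ i _ j (by
      have := i.2; have := j.2; have := j'.2; simp only [Fin.val_mk]; omega)
  · exact key _ i' _ j' (by
      have := i'.2; have := j'.2; have := j.2; simp only [Fin.val_mk]; omega)

/-- The index predicate for the Lagrangian basis. -/
def PY (m r : ℕ) : (Fin (m + 2 * r) × Fin m) ⊕ (Fin (m + 2 * r) × Fin m) → Prop := fun x =>
  Sum.elim
    (fun p => m + r ≤ (p.1 : ℕ) + (p.2 : ℕ) ∨
      (r ≤ (p.1 : ℕ) ∧ (p.1 : ℕ) + (p.2 : ℕ) + 1 = m + r))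
    (fun p => m + r ≤ (p.1 : ℕ) + (p.2 : ℕ)) x

instance PY.decidable (m r : ℕ) : DecidablePred (PY m r) := fun x => by
  unfold PY
  cases x <;> simp only [Sum.elim_inl, Sum.elim_inr] <;> infer_instance

lemma count_fin (n a : ℕ) : (∑ i : Fin n, if a ≤ (i : ℕ) then 1 else 0) = n - a := by
  induction n with
  | zero => simp
  | succ n ih =>
    rw [Fin.sum_univ_castSucc]
    simp only [Fin.coe_castSucc, Fin.val_last]
    rw [ih]
    by_cases h : a ≤ n
    · rw [if_pos h]; omega
    · rw [if_neg h]; omega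

lemma sum_fin_linear (m c : ℕ) : (∑ j : Fin m, (2 * (j : ℕ) + (2 * c + 1))) = (m + 2 * c) * m := by
  induction m with
  | zero => simp
  | succ k ih =>
    rw [Fin.sum_univ_castSucc]
    simp only [Fin.coe_castSucc, Fin.val_last]
    rw [ih]
    ring

lemma PY_card (m r : ℕ) : Fintype.card {x // PY m r x} = (m + 2 * r) * m := by
  rw [Fintype.card_subtype, Finset.card_filter]
  rw [Fintype.sum_sum_type]
  have hA : (∑ p : Fin (m + 2 * r) × Fin m, if PY m r (Sum.inl p) then 1 else 0)
      = ∑ j : Fin m, ((m + 2 * r) - (m + r - 1 - (j : ℕ))) := by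
    rw [Fintype.sum_prod_type, Finset.sum_comm]
    refine Finset.sum_congr rfl fun j _ => ?_
    rw [← count_fin (m + 2 * r) (m + r - 1 - (j : ℕ))]
    refine Finset.sum_congr rfl fun i _ => ?_
    refine if_congr ?_ rfl rfl
    have hj := j.2
    have hi := i.2
    simp only [PY, Sum.elim_inl]
    constructor
    · rintro (h | ⟨h1, h2⟩) <;> omega
    · intro h; omega
  have hB : (∑ p : Fin (m + 2 * r) × Fin m, if PY m r (Sum.inr p) then 1 else 0)
      = ∑ j : Fin m, ((m + 2 * r) - (m + r - (j : ℕ))) := by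
    rw [Fintype.sum_prod_type, Finset.sum_comm]
    refine Finset.sum_congr rfl fun j _ => ?_
    rw [← count_fin (m + 2 * r) (m + r - (j : ℕ))]
    refine Finset.sum_congr rfl fun i _ => ?_
    refine if_congr ?_ rfl rfl
    have hj := j.2
    have hi := i.2
    simp only [PY, Sum.elim_inr]
    omega
  rw [hA, hB, ← Finset.sum_add_distrib]
  rw [← sum_fin_linear m r]
  refine Finset.sum_congr rfl fun j _ => ?_
  have hj := j.2
  omega

theorem stmt16 (m r : ℕ) (hm : 1 ≤ m) :
    (∀ x ∈ Submodule.span ℂ (Yset m r), ∀ y ∈ Submodule.span ℂ (Yset m r),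
        RSform (m + 2 * r) m x y = 0) ∧
      Module.finrank ℂ (Submodule.span ℂ (Yset m r)) = (m + 2 * r) * m := by
  constructor
  · intro x hx y hy
    induction hx, hy using Submodule.span_induction₂ with
    | mem_mem p q hp hq => exact Yset_pair m r p q hp hq
    | zero_left y hy => simp [RSform]
    | zero_right x hx => simp [RSform]
    | add_left x y z _ _ _ h1 h2 =>
      have : RSform (m + 2 * r) m (x + y) z
          = RSform (m + 2 * r) m x z + RSform (m + 2 * r) m y z := by
        simp only [RSform, Prod.fst_add, Prod.snd_add, map_add, LinearMap.add_apply]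
        ring
      rw [this, h1, h2, add_zero]
    | add_right x y z _ _ _ h1 h2 =>
      have : RSform (m + 2 * r) m x (y + z)
          = RSform (m + 2 * r) m x y + RSform (m + 2 * r) m x z := by
        simp only [RSform, Prod.fst_add, Prod.snd_add, map_add, LinearMap.add_apply]
        ring
      rw [this, h1, h2, add_zero]
    | smul_left c x y _ _ h1 =>
      have : RSform (m + 2 * r) m (c • x) y = c * RSform (m + 2 * r) m x y := by
        simp only [RSform, Prod.smul_fst, Prod.smul_snd, map_smul, LinearMap.smul_apply,
          smul_eq_mul]
        ring
      rw [this, h1, mul_zero]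
    | smul_right c x y _ _ h1 =>
      have : RSform (m + 2 * r) m x (c • y) = c * RSform (m + 2 * r) m x y := by
        simp only [RSform, Prod.smul_fst, Prod.smul_snd, map_smul, LinearMap.smul_apply,
          smul_eq_mul]
        ring
      rw [this, h1, mul_zero]
  · -- dimension count
    let basT : Module.Basis (Fin (m + 2 * r) × Fin m) ℂ ((Fin (m + 2 * r) → ℂ) ⊗[ℂ] (Fin m → ℂ)) :=
      Module.Basis.tensorProduct (Pi.basisFun ℂ (Fin (m + 2 * r))) (Pi.basisFun ℂ (Fin m))
    let basV := basT.prod basT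
    have hbl : ∀ (i : Fin (m + 2 * r)) (j : Fin m),
        basV (Sum.inl (i, j)) = (stdVec (m + 2 * r) i ⊗ₜ[ℂ] stdVec m j, 0) := by
      intro i j
      have h1 : (basV (Sum.inl (i, j))).1 = stdVec (m + 2 * r) i ⊗ₜ[ℂ] stdVec m j := by
        rw [Module.Basis.prod_apply_inl_fst, Module.Basis.tensorProduct_apply, Pi.basisFun_apply,
          Pi.basisFun_apply]
        rfl
      have h2 : (basV (Sum.inl (i, j))).2 = 0 := Module.Basis.prod_apply_inl_snd _ _ _
      rw [← h1, ← h2]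
    have hbr : ∀ (i : Fin (m + 2 * r)) (j : Fin m),
        basV (Sum.inr (i, j)) = (0, stdVec (m + 2 * r) i ⊗ₜ[ℂ] stdVec m j) := by
      intro i j
      have h1 : (basV (Sum.inr (i, j))).1 = 0 := Module.Basis.prod_apply_inr_fst _ _ _
      have h2 : (basV (Sum.inr (i, j))).2 = stdVec (m + 2 * r) i ⊗ₜ[ℂ] stdVec m j := by
        rw [Module.Basis.prod_apply_inr_snd, Module.Basis.tensorProduct_apply, Pi.basisFun_apply,
          Pi.basisFun_apply]
        rfl
      rw [← h1, ← h2]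
    have hYeq : Yset m r = ⇑basV '' {x | PY m r x} := by
      ext p
      constructor
      · rintro (⟨i, j, hij, hp | hp⟩ | ⟨j, hp⟩)
        · exact ⟨Sum.inl (i, j), Or.inl hij, by rw [hbl, ← hp]⟩
        · exact ⟨Sum.inr (i, j), hij, by rw [hbr, ← hp]⟩
        · refine ⟨Sum.inl (⟨(j : ℕ) + r, by have := j.2; omega⟩,
            ⟨m - 1 - (j : ℕ), by have := j.2; omega⟩), ?_, by rw [hbl, ← hp]⟩
          right
          have := j.2
          exact ⟨by simp, by simp; omega⟩
      · rintro ⟨x, hx, rfl⟩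
        cases x with
        | inl q =>
          rcases hx with h | ⟨h1, h2⟩
          · exact Or.inl ⟨q.1, q.2, h, Or.inl (by rw [hbl])⟩
          · refine Or.inr ⟨⟨(q.1 : ℕ) - r, by have := q.2.2; have := q.1.2; omega⟩, ?_⟩
            have h1' := q.1.2
            have h2' := q.2.2
            have e1 : (⟨((⟨(q.1 : ℕ) - r, by omega⟩ : Fin m) : ℕ) + r, by
                have : (q.1 : ℕ) - r + r < m + 2 * r := by omega
                simpa using this⟩ : Fin (m + 2 * r)) = q.1 :=
              Fin.ext (by show (q.1 : ℕ) - r + r = (q.1 : ℕ); omega)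
            have e2 : (⟨m - 1 - ((⟨(q.1 : ℕ) - r, by omega⟩ : Fin m) : ℕ), by
                omega⟩ : Fin m) = q.2 :=
              Fin.ext (by show m - 1 - ((q.1 : ℕ) - r) = (q.2 : ℕ); omega)
            rw [hbl q.1 q.2]
            rw [e1, e2]
        | inr q => exact Or.inl ⟨q.1, q.2, hx, Or.inr (by rw [hbr])⟩
    have hli : LinearIndependent ℂ (fun x : {x // PY m r x} => basV ↑x) :=
      basV.linearIndependent.comp _ Subtype.val_injective
    have hrange : Set.range (fun x : {x // PY m r x} => basV ↑x)
        = ⇑basV '' {x | PY m r x} := by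
      ext y
      constructor
      · rintro ⟨x, rfl⟩; exact ⟨↑x, x.2, rfl⟩
      · rintro ⟨x, hx, rfl⟩; exact ⟨⟨x, hx⟩, rfl⟩
    rw [hYeq, ← hrange, finrank_span_eq_card hli]
    exact PY_card m r
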